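/- For μ − σ < x < μ + σ with (x−μ)/σ ≠ 0 avoided or handled, the BGN density f(x; α,β,μ,σ,s) converges as s → ∞ to (1/(2σ)) f_Beta((1/2)((x−μ)/σ + 1)), where f_Beta is the beta(α,β) density; and f(x) → 0 for |x − μ| > σ. -/

import Mathlib

open MeasureTheory Real Filter

section BGNAux

open Set

noncomputable def bgnc (s : ℝ) : ℝ := s / (2 * Real.Gamma (1 / s))
noncomputable def bgnphi (s t : ℝ) : ℝ := bgnc s * Real.exp (-(|t| ^ s))


lemma bgn_c_tendsto : Tendsto bgnc atTop (nhds (1/2)) := by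
  have hG : ContinuousAt Real.Gamma 1 := by
    refine (Real.differentiableAt_Gamma ?_).continuousAt
    intro m h
    have : (0:ℝ) ≤ m := Nat.cast_nonneg m
    nlinarith [h]
  have h1 : Tendsto (fun s : ℝ => 1/s + 1) atTop (nhds 1) := by
    have := tendsto_inv_atTop_zero (𝕜 := ℝ)
    have h2 := this.add (tendsto_const_nhds (x := (1:ℝ)))
    simp only [zero_add] at h2
    simpa [one_div] using h2
  have h3 : Tendsto (fun s : ℝ => Real.Gamma (1/s + 1)) atTop (nhds 1) := by
    simpa [Real.Gamma_one, Function.comp_def] using (hG.tendsto.comp h1)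
  have h4 : Tendsto (fun s : ℝ => 1 / (2 * Real.Gamma (1/s + 1))) atTop (nhds (1/2)) := by
    have h5 : Tendsto (fun s : ℝ => (2 * Real.Gamma (1/s + 1))) atTop (nhds 2) := by
      simpa using h3.const_mul (2:ℝ)
    simpa using h5.inv₀ (by norm_num)
  refine h4.congr' ?_
  filter_upwards [eventually_gt_atTop (0:ℝ)] with s hs
  have hΓpos : 0 < Real.Gamma (1/s) := Real.Gamma_pos_of_pos (by positivity)
  rw [Real.Gamma_add_one (by positivity)]
  unfold bgnc
  field_simp

lemma bgn_c_nonneg {s : ℝ} (hs : 0 < s) : 0 ≤ bgnc s := by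
  have : 0 < Real.Gamma (1/s) := Real.Gamma_pos_of_pos (by positivity)
  unfold bgnc; positivity

lemma bgn_nonneg {s : ℝ} (hs : 0 < s) (t : ℝ) : 0 ≤ bgnphi s t :=
  mul_nonneg (bgn_c_nonneg hs) (Real.exp_nonneg _)

lemma bgn_exp_bound {s : ℝ} (hs : 2 ≤ s) (t : ℝ) :
    Real.exp (-(|t| ^ s)) ≤ Real.exp 1 * Real.exp (-(t^2)) := by
  rw [← Real.exp_add]
  apply Real.exp_le_exp.mpr
  rcases le_or_gt (|t|) 1 with h | h
  · have h1 : (0:ℝ) ≤ |t| ^ s := Real.rpow_nonneg (abs_nonneg t) s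
    nlinarith [sq_abs t, abs_nonneg t]
  · have h2 : |t| ^ (2:ℝ) ≤ |t| ^ s := Real.rpow_le_rpow_of_exponent_le h.le hs
    rw [Real.rpow_two, sq_abs] at h2
    linarith

lemma bgn_continuous {s : ℝ} (hs : 0 < s) : Continuous (bgnphi s) := by
  apply Continuous.mul continuous_const
  apply Real.continuous_exp.comp
  apply Continuous.neg
  apply Continuous.rpow_const continuous_abs
  intro t
  exact Or.inr hs.le

lemma bgn_integrable {s : ℝ} (hs : 2 ≤ s) : Integrable (bgnphi s) := by
  have hs0 : (0:ℝ) < s := by linarith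
  have hbound : Integrable (fun t : ℝ => |bgnc s| * (Real.exp 1 * Real.exp (-(t^2)))) := by
    have : Integrable (fun t : ℝ => Real.exp (-(1:ℝ) * t^2)) := integrable_exp_neg_mul_sq one_pos
    have h2 := this.const_mul (|bgnc s| * Real.exp 1)
    refine h2.congr (EventuallyEq.of_eq ?_)
    funext t
    simp [neg_mul, mul_assoc]
  refine hbound.mono' ((bgn_continuous hs0).aestronglyMeasurable) ?_
  filter_upwards with t
  rw [Real.norm_eq_abs]
  unfold bgnphi
  rw [abs_mul, abs_of_nonneg (Real.exp_nonneg _)]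
  exact mul_le_mul_of_nonneg_left (bgn_exp_bound hs t) (abs_nonneg _)


lemma bgn_abs_rpow_lim0 {t : ℝ} (h : |t| < 1) :
    Tendsto (fun s : ℝ => |t| ^ s) atTop (nhds 0) := by
  rcases eq_or_ne t 0 with rfl | ht
  · refine tendsto_const_nhds.congr' ?_
    filter_upwards [eventually_gt_atTop (0:ℝ)] with s hs
    simp [Real.zero_rpow hs.ne']
  · have h0 : 0 < |t| := abs_pos.mpr ht
    have hlog : Real.log |t| < 0 := Real.log_neg h0 h
    have h1 : Tendsto (fun s : ℝ => Real.log |t| * s) atTop atBot := by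
      simpa [mul_comm] using (tendsto_id (α := ℝ)).atTop_mul_const_of_neg hlog
    have := Real.tendsto_exp_atBot.comp h1
    refine this.congr (fun s => ?_)
    simp [Real.rpow_def_of_pos h0]

lemma bgn_abs_rpow_limtop {t : ℝ} (h : 1 < |t|) :
    Tendsto (fun s : ℝ => |t| ^ s) atTop atTop := by
  have hlog : 0 < Real.log |t| := Real.log_pos h
  have h1 : Tendsto (fun s : ℝ => Real.log |t| * s) atTop atTop := by
    simpa [mul_comm] using (tendsto_id (α := ℝ)).atTop_mul_const hlog
  have := Real.tendsto_exp_atTop.comp h1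
  refine this.congr (fun s => ?_)
  simp [Real.rpow_def_of_pos (by linarith : (0:ℝ) < |t|)]

lemma bgn_lim_lt {t : ℝ} (h : |t| < 1) :
    Tendsto (fun s : ℝ => bgnphi s t) atTop (nhds (1/2)) := by
  have h2 : Tendsto (fun s : ℝ => Real.exp (-(|t| ^ s))) atTop (nhds 1) := by
    have h1 : Tendsto (fun s : ℝ => -(|t| ^ s)) atTop (nhds 0) := by simpa using (bgn_abs_rpow_lim0 h).neg
    simpa [Function.comp_def] using (Real.continuous_exp.continuousAt (x := 0)).tendsto.comp h1
  simpa [bgnphi] using bgn_c_tendsto.mul h2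

lemma bgn_lim_gt {t : ℝ} (h : 1 < |t|) :
    Tendsto (fun s : ℝ => bgnphi s t) atTop (nhds 0) := by
  have h2 : Tendsto (fun s : ℝ => Real.exp (-(|t| ^ s))) atTop (nhds 0) :=
    Real.tendsto_exp_neg_atTop_nhds_zero.comp (bgn_abs_rpow_limtop h)
  simpa [bgnphi] using bgn_c_tendsto.mul h2


lemma bgn_mass {s : ℝ} (hs : 0 < s) : ∫ t : ℝ, bgnphi s t = 1 := by
  have h1 : ∫ t : ℝ, Real.exp (-(|t| ^ s)) = 2 * ∫ t in Ioi (0:ℝ), Real.exp (-(t ^ s)) := by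
    exact integral_comp_abs (f := fun x => Real.exp (-(x ^ s)))
  have h2 : ∫ t in Ioi (0:ℝ), Real.exp (-(t ^ s)) = Real.Gamma (1/s + 1) :=
    integral_exp_neg_rpow hs
  have hΓpos : 0 < Real.Gamma (1/s) := Real.Gamma_pos_of_pos (by positivity)
  unfold bgnphi
  rw [MeasureTheory.integral_const_mul, h1, h2, Real.Gamma_add_one (by positivity : (1:ℝ)/s ≠ 0)]
  unfold bgnc
  field_simp



lemma bgn_Phi_tendsto {z : ℝ} (h1 : -1 < z) (h2 : z < 1) :
    Tendsto (fun s : ℝ => ∫ t in Iic z, bgnphi s t) atTop (nhds ((z+1)/2)) := by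
  have key := MeasureTheory.tendsto_integral_filter_of_dominated_convergence
      (μ := volume.restrict (Iic z)) (l := atTop) (F := fun s t => bgnphi s t)
      (f := (Ioo (-1:ℝ) 1).indicator (fun _ => (1/2:ℝ)))
      (bound := fun t => Real.exp 1 * Real.exp (-(t^2))) ?_ ?_ ?_ ?_
  · have hval : ∫ t in Iic z, (Ioo (-1:ℝ) 1).indicator (fun _ => (1/2:ℝ)) t = (z+1)/2 := by
      rw [MeasureTheory.integral_indicator measurableSet_Ioo,
        Measure.restrict_restrict measurableSet_Ioo]
      have hset : Ioo (-1:ℝ) 1 ∩ Iic z = Ioc (-1) z := by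
        ext t
        simp only [mem_inter_iff, mem_Ioo, mem_Iic, mem_Ioc]
        exact ⟨fun ⟨⟨a, _⟩, c⟩ => ⟨a, c⟩, fun ⟨a, c⟩ => ⟨⟨a, lt_of_le_of_lt c h2⟩, c⟩⟩
      rw [hset, setIntegral_const, Real.volume_real_Ioc_of_le (by linarith)]
      simp only [smul_eq_mul]
      ring
    rw [hval] at key
    exact key
  · filter_upwards [eventually_gt_atTop (0:ℝ)] with s hs
    exact ((bgn_continuous hs).aestronglyMeasurable).restrict
  · have hc1 : ∀ᶠ s : ℝ in atTop, bgnc s < 1 := bgn_c_tendsto.eventually_lt_const (by norm_num)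
    filter_upwards [eventually_ge_atTop (2:ℝ), hc1] with s hs hcs
    refine ae_of_all _ (fun t => ?_)
    have h0 : (0:ℝ) < s := by linarith
    rw [Real.norm_eq_abs, abs_of_nonneg (bgn_nonneg h0 t)]
    calc bgnphi s t ≤ 1 * Real.exp (-(|t| ^ s)) :=
          mul_le_mul_of_nonneg_right hcs.le (Real.exp_nonneg _)
      _ ≤ Real.exp 1 * Real.exp (-(t^2)) := by rw [one_mul]; exact bgn_exp_bound hs t
  · exact (((integrable_exp_neg_mul_sq one_pos).const_mul (Real.exp 1)).congr
      (EventuallyEq.of_eq (by funext t; simp [neg_mul]))).restrict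
  · have hbad : ∀ᵐ t : ℝ ∂(volume.restrict (Iic z)), t ∉ ({-1, 1} : Set ℝ) := by
      refine ae_restrict_of_ae ?_
      have hm : volume ({-1, 1} : Set ℝ) = 0 :=
        ((Set.countable_singleton (1:ℝ)).insert (-1)).measure_zero _
      exact measure_eq_zero_iff_ae_notMem.mp hm
    filter_upwards [hbad] with t ht
    rcases lt_trichotomy (|t|) 1 with h | h | h
    · have hmem : t ∈ Ioo (-1:ℝ) 1 := by
        rcases abs_lt.mp h with ⟨a, b⟩; exact ⟨a, b⟩
      rw [indicator_of_mem hmem]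
      exact bgn_lim_lt h
    · exfalso
      rcases abs_eq (by norm_num : (0:ℝ) ≤ 1) |>.mp h with h' | h'
      · exact ht (by simp [h'])
      · exact ht (by simp [h'])
    · have hmem : t ∉ Ioo (-1:ℝ) 1 := by
        intro hm
        rcases hm with ⟨a, b⟩
        have := abs_lt.mpr ⟨a, b⟩
        linarith
      rw [indicator_of_notMem hmem]
      exact bgn_lim_gt h


lemma bgn_rpow_ineq {s w t : ℝ} (hs : 2 ≤ s) (hw : 1 < w) (ht : w ≤ t) :
    w ^ s + (t - w) ≤ t ^ s := by
  have hw0 : (0:ℝ) < w := by linarith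
  have ht0 : (0:ℝ) < t := by linarith
  have h1 : w ^ (s-1) ≤ t ^ (s-1) := Real.rpow_le_rpow hw0.le ht (by linarith)
  have h2 : (1:ℝ) ≤ w ^ (s-1) := by
    have := Real.rpow_le_rpow_of_exponent_le hw.le (by linarith : (0:ℝ) ≤ s - 1)
    simpa using this
  have h3 : t ^ s = t ^ (s-1) * t := by
    rw [← Real.rpow_add_one ht0.ne']; ring_nf
  have h4 : w ^ s = w ^ (s-1) * w := by
    rw [← Real.rpow_add_one hw0.ne']; ring_nf
  rw [h3, h4]
  nlinarith

lemma bgn_tail_upper {s w : ℝ} (hs : 2 ≤ s) (hw : 1 < w) :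
    ∫ t in Ioi w, bgnphi s t ≤ bgnc s * Real.exp (-(w ^ s)) := by
  have hs0 : (0:ℝ) < s := by linarith
  have hInt2 : IntegrableOn (fun t : ℝ => bgnc s * Real.exp (-(w ^ s)) * Real.exp w *
      Real.exp (-t)) (Ioi w) := by
    have := (exp_neg_integrableOn_Ioi w (one_pos)).const_mul
      (bgnc s * Real.exp (-(w ^ s)) * Real.exp w)
    refine this.congr (EventuallyEq.of_eq (funext fun t => by norm_num))
  have step : ∫ t in Ioi w, bgnphi s t ≤ ∫ t in Ioi w,
      bgnc s * Real.exp (-(w ^ s)) * Real.exp w * Real.exp (-t) := by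
    refine setIntegral_mono_on ((bgn_integrable hs).integrableOn) hInt2 measurableSet_Ioi ?_
    intro t ht
    have htw : w ≤ t := (le_of_lt ht)
    have ht1 : (0:ℝ) < t := by linarith
    have habs : |t| = t := abs_of_pos ht1
    unfold bgnphi
    rw [habs, mul_assoc, mul_assoc, ← Real.exp_add, ← Real.exp_add]
    refine mul_le_mul_of_nonneg_left ?_ (bgn_c_nonneg hs0)
    apply Real.exp_le_exp.mpr
    have := bgn_rpow_ineq hs hw htw
    linarith
  calc ∫ t in Ioi w, bgnphi s t ≤ _ := step
    _ = bgnc s * Real.exp (-(w ^ s)) := by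
        rw [MeasureTheory.integral_const_mul, integral_exp_neg_Ioi, mul_assoc, ← Real.exp_add]
        simp

lemma bgn_tail_lower {s w : ℝ} (hs : 2 ≤ s) (hw : 1 < w) :
    bgnc s * (w / (s * (w ^ s + 1))) * Real.exp (-(w ^ s + 1)) ≤ ∫ t in Ioi w, bgnphi s t := by
  have hs0 : (0:ℝ) < s := by linarith
  have hw0 : (0:ℝ) < w := by linarith
  have hws : (1:ℝ) ≤ w ^ s := Real.one_le_rpow hw.le hs0.le
  set δ : ℝ := w / (s * (w ^ s + 1)) with hδdef
  have hδ : 0 < δ := by positivity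
  have key : ∀ t ∈ Ioc w (w + δ), t ^ s ≤ w ^ s + 1 := by
    intro t ht
    rcases ht with ⟨ht1, ht2⟩
    have ht0 : (0:ℝ) < t := by linarith
    set u : ℝ := 1 / (s * (w ^ s + 1)) with hu
    have hu0 : 0 < u := by positivity
    have htw : t ≤ w * (1 + u) := by
      rw [hδdef] at ht2
      have heq : w * (1 + u) = w + δ := by rw [hu, hδdef]; ring
      linarith
    have h1 : t ^ s ≤ (w * (1+u)) ^ s := Real.rpow_le_rpow ht0.le htw hs0.le
    have h2 : (w * (1+u)) ^ s = w ^ s * (1+u) ^ s :=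
      Real.mul_rpow hw0.le (by linarith)
    have h3 : (1+u) ^ s ≤ Real.exp (u * s) := by
      rw [Real.exp_mul]
      refine Real.rpow_le_rpow (by linarith) ?_ hs0.le
      have := Real.add_one_le_exp u
      linarith
    set x : ℝ := 1 / (w ^ s + 1) with hx
    have hux : u * s = x := by
      rw [hu, hx]; field_simp
    have hx1 : x ≤ 1/2 := by
      rw [hx]
      rw [div_le_div_iff₀ (by positivity) (by norm_num)]
      linarith
    have hexpx : Real.exp x ≤ 1 / (1 - x) := by
      have h5 := Real.add_one_le_exp (-x)
      have h6 : 0 < 1 - x := by linarith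
      rw [le_div_iff₀ h6]
      have h7 : Real.exp x * Real.exp (-x) = 1 := by
        rw [← Real.exp_add]; simp
      nlinarith [Real.exp_pos x]
    have h8 : w ^ s * Real.exp x ≤ w ^ s + 1 := by
      have h6 : 0 < 1 - x := by linarith
      have h9 : 1 - x = w ^ s / (w ^ s + 1) := by
        rw [hx]; field_simp; ring
      have h10 : w ^ s / (1 - x) = w ^ s + 1 := by
        rw [h9]; field_simp
      calc w ^ s * Real.exp x ≤ w ^ s * (1/(1-x)) :=
            mul_le_mul_of_nonneg_left hexpx (by positivity)
        _ = w ^ s + 1 := by rw [← h10]; ring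
    calc t ^ s ≤ w ^ s * (1+u) ^ s := by rw [← h2]; exact h1
      _ ≤ w ^ s * Real.exp (u*s) := mul_le_mul_of_nonneg_left h3 (by positivity)
      _ = w ^ s * Real.exp x := by rw [hux]
      _ ≤ w ^ s + 1 := h8
  have step1 : ∫ t in Ioc w (w+δ), bgnphi s t ≤ ∫ t in Ioi w, bgnphi s t := by
    refine setIntegral_mono_set ((bgn_integrable hs).integrableOn) ?_ ?_
    · exact ae_of_all _ (fun t => bgn_nonneg hs0 t)
    · exact HasSubset.Subset.eventuallyLE Ioc_subset_Ioi_self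
  have step2 : ∫ t in Ioc w (w+δ), (bgnc s * Real.exp (-(w ^ s + 1))) ≤
      ∫ t in Ioc w (w+δ), bgnphi s t := by
    refine setIntegral_mono_on ?_ ((bgn_integrable hs).integrableOn) measurableSet_Ioc ?_
    · exact integrableOn_const measure_Ioc_lt_top.ne
    · intro t ht
      have ht0 : (0:ℝ) < t := by linarith [ht.1]
      unfold bgnphi
      rw [abs_of_pos ht0]
      refine mul_le_mul_of_nonneg_left ?_ (bgn_c_nonneg hs0)
      apply Real.exp_le_exp.mpr
      have := key t ht
      linarith
  have step3 : ∫ t in Ioc w (w+δ), (bgnc s * Real.exp (-(w ^ s + 1))) =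
      bgnc s * δ * Real.exp (-(w ^ s + 1)) := by
    rw [setIntegral_const, Real.volume_real_Ioc_of_le (by linarith)]
    simp only [smul_eq_mul, add_sub_cancel_left]
    ring
  calc bgnc s * δ * Real.exp (-(w ^ s + 1)) = _ := step3.symm
    _ ≤ ∫ t in Ioc w (w+δ), bgnphi s t := step2
    _ ≤ _ := step1


lemma bgn_wpow_atTop {w : ℝ} (hw : 1 < w) : Tendsto (fun s : ℝ => w ^ s) atTop atTop := by
  have hlog : 0 < Real.log w := Real.log_pos hw
  have h1 : Tendsto (fun s : ℝ => Real.log w * s) atTop atTop := by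
    simpa [mul_comm] using (tendsto_id (α := ℝ)).atTop_mul_const hlog
  refine (Real.tendsto_exp_atTop.comp h1).congr (fun s => ?_)
  simp [Real.rpow_def_of_pos (by linarith : (0:ℝ) < w)]

lemma bgn_s_le_wpow {w : ℝ} (hw : 1 < w) : ∀ᶠ s : ℝ in atTop, s ≤ w ^ s := by
  have hlog : 0 < Real.log w := Real.log_pos hw
  filter_upwards [eventually_ge_atTop (4 / Real.log w ^ 2), eventually_ge_atTop (0:ℝ)]
    with s hs hs0
  have h1 : 1 + s * Real.log w / 2 ≤ Real.exp (s * Real.log w / 2) := by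
    have := Real.add_one_le_exp (s * Real.log w / 2)
    linarith
  have h2 : Real.exp (s * Real.log w) = Real.exp (s * Real.log w / 2) ^ 2 := by
    rw [sq, ← Real.exp_add]
    ring_nf
  have h3 : w ^ s = Real.exp (s * Real.log w) := by
    rw [Real.rpow_def_of_pos (by linarith : (0:ℝ) < w)]; ring_nf
  have h4 : 4 ≤ s * Real.log w ^ 2 := by
    rw [div_le_iff₀ (by positivity)] at hs
    linarith
  have h5 : 0 ≤ s * Real.log w / 2 := by positivity
  rw [h3, h2]
  nlinarith [Real.exp_pos (s * Real.log w / 2)]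

lemma bgn_cexp_tendsto_zero {w : ℝ} (hw : 1 < w) :
    Tendsto (fun s : ℝ => bgnc s * Real.exp (-(w ^ s))) atTop (nhds 0) := by
  have h2 : Tendsto (fun s : ℝ => Real.exp (-(w ^ s))) atTop (nhds 0) :=
    Real.tendsto_exp_neg_atTop_nhds_zero.comp (bgn_wpow_atTop hw)
  simpa using bgn_c_tendsto.mul h2

lemma bgn_tail_tendsto {w : ℝ} (hw : 1 < w) :
    Tendsto (fun s : ℝ => ∫ t in Ioi w, bgnphi s t) atTop (nhds 0) := by
  refine squeeze_zero' ?_ ?_ (bgn_cexp_tendsto_zero hw)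
  · filter_upwards [eventually_gt_atTop (0:ℝ)] with s hs
    exact setIntegral_nonneg measurableSet_Ioi (fun t _ => bgn_nonneg hs t)
  · filter_upwards [eventually_ge_atTop (2:ℝ)] with s hs
    exact bgn_tail_upper hs hw


lemma bgn_key {w γ : ℝ} (hw : 1 < w) (hγ : 0 < γ) :
    Tendsto (fun s : ℝ => (∫ t in Ioi w, bgnphi s t) ^ (γ - 1) * (bgnc s * Real.exp (-(w ^ s))))
      atTop (nhds 0) := by
  have hw0 : (0:ℝ) < w := by linarith
  have hTnonneg : ∀ᶠ s : ℝ in atTop, 0 ≤ (∫ t in Ioi w, bgnphi s t) := by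
    filter_upwards [eventually_gt_atTop (0:ℝ)] with s hs
    exact setIntegral_nonneg measurableSet_Ioi (fun t _ => bgn_nonneg hs t)
  have hnonneg : ∀ᶠ s : ℝ in atTop,
      0 ≤ (∫ t in Ioi w, bgnphi s t) ^ (γ - 1) * (bgnc s * Real.exp (-(w ^ s))) := by
    filter_upwards [eventually_gt_atTop (0:ℝ), hTnonneg] with s hs hT
    exact mul_nonneg (Real.rpow_nonneg hT _)
      (mul_nonneg (bgn_c_nonneg hs) (Real.exp_nonneg _))
  rcases le_or_gt 1 γ with hγ1 | hγ1
  · -- γ ≥ 1 : T^(γ-1) ≤ 1 eventually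
    refine squeeze_zero' hnonneg ?_ (bgn_cexp_tendsto_zero hw)
    filter_upwards [eventually_ge_atTop (2:ℝ), bgn_c_tendsto.eventually_lt_const
      (by norm_num : (1:ℝ)/2 < 1), hTnonneg] with s hs hc hT
    have hT1 : (∫ t in Ioi w, bgnphi s t) ≤ 1 := by
      refine le_trans (bgn_tail_upper hs hw) ?_
      have h1 : Real.exp (-(w ^ s)) ≤ 1 := by
        rw [Real.exp_le_one_iff]
        have : (0:ℝ) ≤ w ^ s := Real.rpow_nonneg hw0.le s
        linarith
      nlinarith [Real.exp_nonneg (-(w ^ s)), bgn_c_nonneg (by linarith : (0:ℝ) < s)]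
    have := Real.rpow_le_one hT hT1 (by linarith : 0 ≤ γ - 1)
    calc (∫ t in Ioi w, bgnphi s t) ^ (γ - 1) * (bgnc s * Real.exp (-(w ^ s)))
        ≤ 1 * (bgnc s * Real.exp (-(w ^ s))) := by
          refine mul_le_mul_of_nonneg_right this ?_
          exact mul_nonneg (bgn_c_nonneg (by linarith)) (Real.exp_nonneg _)
      _ = _ := one_mul _
  · -- γ < 1
    set Q : ℝ → ℝ := fun y => (4 * (y+1)^2 * Real.exp (y+1)) ^ (1-γ) * Real.exp (-y) with hQ
    have hQlim : Tendsto Q atTop (nhds 0) := by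
      have base := tendsto_rpow_mul_exp_neg_mul_atTop_nhds_zero (2*(1-γ)) γ hγ
      have shift : Tendsto (fun y : ℝ => y + 1) atTop atTop :=
        tendsto_atTop_add_const_right _ _ tendsto_id
      have comp := (base.comp shift).const_mul ((4:ℝ)^(1-γ) * Real.exp 1)
      rw [mul_zero] at comp
      refine comp.congr' ?_
      filter_upwards [eventually_ge_atTop (0:ℝ)] with y hy
      have hy1 : (0:ℝ) ≤ y + 1 := by linarith
      have e1 : ((4:ℝ) * (y+1)^2 * Real.exp (y+1)) ^ (1-γ)
          = (4:ℝ)^(1-γ) * ((y+1)^2)^(1-γ) * (Real.exp (y+1))^(1-γ) := by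
        rw [Real.mul_rpow (by positivity) (Real.exp_nonneg _),
          Real.mul_rpow (by norm_num) (by positivity)]
      have e2 : ((y+1)^2 : ℝ)^(1-γ) = (y+1)^(2*(1-γ)) := by
        rw [← Real.rpow_natCast (y+1) 2, ← Real.rpow_mul hy1]
        norm_num
      have e3 : (Real.exp (y+1))^(1-γ) = Real.exp ((y+1)*(1-γ)) := (Real.exp_mul _ _).symm
      have e4 : Real.exp ((y+1)*(1-γ)) * Real.exp (-y) = Real.exp 1 * Real.exp (-(γ*(y+1))) := by
        rw [← Real.exp_add, ← Real.exp_add]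
        congr 1
        ring
      simp only [Function.comp, hQ]
      rw [e1, e2, e3]
      have e5 : (4:ℝ)^(1-γ) * ((y+1)^(2*(1-γ))) * Real.exp ((y+1)*(1-γ)) * Real.exp (-y)
          = (4:ℝ)^(1-γ) * ((y+1)^(2*(1-γ))) * (Real.exp ((y+1)*(1-γ)) * Real.exp (-y)) := by
        ring
      rw [e5, e4, neg_mul]
      ring
    refine squeeze_zero' hnonneg ?_ (hQlim.comp (bgn_wpow_atTop hw))
    filter_upwards [eventually_ge_atTop (2:ℝ), bgn_c_tendsto.eventually_lt_const
      (by norm_num : (1:ℝ)/2 < 1), bgn_c_tendsto.eventually_const_lt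
      (by norm_num : (1:ℝ)/4 < 1/2), bgn_s_le_wpow hw, hTnonneg] with s hs hc1 hc4 hsw hT
    set y : ℝ := w ^ s with hy
    have hs0 : (0:ℝ) < s := by linarith
    have hy0 : (0:ℝ) < y := Real.rpow_pos_of_pos hw0 s
    set L : ℝ := bgnc s * (w / (s * (y + 1))) * Real.exp (-(y + 1)) with hL
    have hc0 : 0 < bgnc s := by linarith
    have hL0 : 0 < L := by
      rw [hL]; positivity
    set M : ℝ := 4 * (y+1)^2 * Real.exp (y+1) with hM
    have hM0 : 0 < M := by rw [hM]; positivity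
    have hLM : L * M = 4 * bgnc s * w * (y + 1) / s := by
      rw [hL, hM, Real.exp_neg]
      field_simp
    have h1LM : 1 ≤ L * M := by
      rw [hLM, le_div_iff₀ hs0]
      have k1 : (1:ℝ) ≤ 4 * bgnc s := by linarith
      have k2 : s ≤ y + 1 := by linarith
      have k4 : s ≤ w * (y+1) := by nlinarith
      have k5 : (1:ℝ) * (w*(y+1)) ≤ (4*bgnc s) * (w*(y+1)) :=
        mul_le_mul_of_nonneg_right k1 (by positivity)
      nlinarith [k4, k5]
    have hLinvM : L⁻¹ ≤ M := by
      calc L⁻¹ = L⁻¹ * 1 := (mul_one _).symm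
        _ ≤ L⁻¹ * (L * M) := mul_le_mul_of_nonneg_left h1LM (inv_nonneg.mpr hL0.le)
        _ = M := by field_simp
    have hTL : L ≤ ∫ t in Ioi w, bgnphi s t := bgn_tail_lower hs hw
    have hstep1 : (∫ t in Ioi w, bgnphi s t) ^ (γ-1) ≤ L ^ (γ-1) :=
      Real.rpow_le_rpow_of_nonpos hL0 hTL (by linarith)
    have hstep2 : L ^ (γ-1) = (L⁻¹) ^ (1-γ) := by
      rw [← Real.rpow_neg_one L, ← Real.rpow_mul hL0.le]
      congr 1
      ring
    have hstep3 : (L⁻¹) ^ (1-γ) ≤ M ^ (1-γ) :=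
      Real.rpow_le_rpow (inv_nonneg.mpr hL0.le) hLinvM (by linarith)
    have hfinal : (∫ t in Ioi w, bgnphi s t) ^ (γ-1) * (bgnc s * Real.exp (-(w ^ s)))
        ≤ Q y := by
      rw [hQ]
      have hA : (∫ t in Ioi w, bgnphi s t) ^ (γ-1) ≤ M ^ (1-γ) := by
        rw [hstep2] at hstep1
        exact le_trans hstep1 hstep3
      have hB : bgnc s * Real.exp (-(w ^ s)) ≤ Real.exp (-y) := by
        rw [← hy]
        nlinarith [Real.exp_nonneg (-y)]
      refine mul_le_mul hA hB ?_ ?_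
      · exact mul_nonneg hc0.le (Real.exp_nonneg _)
      · positivity
    exact hfinal

lemma bgn_one_sub_Phi {s : ℝ} (z : ℝ) (hs : 2 ≤ s) :
    1 - (∫ t in Iic z, bgnphi s t) = ∫ t in Ioi z, bgnphi s t := by
  have h := intervalIntegral.integral_Iic_add_Ioi (b := z) (μ := volume)
    ((bgn_integrable hs).integrableOn) ((bgn_integrable hs).integrableOn)
  rw [bgn_mass (by linarith : (0:ℝ) < s)] at h
  linarith

lemma bgn_Phi_reflect (s z : ℝ) :
    (∫ t in Iic z, bgnphi s t) = ∫ t in Ioi (-z), bgnphi s t := by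
  rw [← integral_comp_neg_Iic z (bgnphi s)]
  refine setIntegral_congr_fun measurableSet_Iic (fun t _ => ?_)
  simp [bgnphi, abs_neg]

end BGNAux

theorem bgn_density_limit_beta (α β μ σ : ℝ)
    (hα : 0 < α) (hβ : 0 < β) (hσ : 0 < σ)
    (φ : ℝ → ℝ → ℝ)
    (hφ : ∀ s z, φ s z = s / (2 * Real.Gamma (1 / s)) * Real.exp (-(|z| ^ s)))
    (Φ : ℝ → ℝ → ℝ) (hΦ : ∀ s z, Φ s z = ∫ t in Set.Iic z, φ s t)
    (B : ℝ) (hB : B = Real.Gamma α * Real.Gamma β / Real.Gamma (α + β))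
    (f : ℝ → ℝ → ℝ)
    (hf : ∀ s x, f s x = 1 / (σ * B) * Φ s ((x - μ) / σ) ^ (α - 1) *
      (1 - Φ s ((x - μ) / σ)) ^ (β - 1) * φ s ((x - μ) / σ)) :
    (∀ x : ℝ, μ - σ < x → x < μ + σ → x ≠ μ →
      Tendsto (fun s : ℝ => f s x) atTop
        (nhds (1 / (2 * σ) *
          ((((x - μ) / σ + 1) / 2) ^ (α - 1) * (1 - ((x - μ) / σ + 1) / 2) ^ (β - 1) / B)))) ∧
    (∀ x : ℝ, σ < |x - μ| → Tendsto (fun s : ℝ => f s x) atTop (nhds 0)) := by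
  have hφ' : φ = bgnphi := by
    funext s t
    rw [hφ]
    rfl
  have hΦ' : ∀ s z, Φ s z = ∫ t in Set.Iic z, bgnphi s t := by
    intro s z
    rw [hΦ, hφ']
  have hB0 : 0 < B := by
    rw [hB]
    have h1 := Real.Gamma_pos_of_pos hα
    have h2 := Real.Gamma_pos_of_pos hβ
    have h3 := Real.Gamma_pos_of_pos (by linarith : 0 < α + β)
    positivity
  constructor
  · -- Part 1 : |z| < 1
    intro x hx1 hx2 _
    set z : ℝ := (x - μ) / σ with hz
    have hz1 : -1 < z := by
      rw [hz, lt_div_iff₀ hσ]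
      linarith
    have hz2 : z < 1 := by
      rw [hz, div_lt_one hσ]
      linarith
    have habs : |z| < 1 := abs_lt.mpr ⟨hz1, hz2⟩
    set A : ℝ := (z + 1) / 2 with hA
    have hA0 : 0 < A := by rw [hA]; linarith
    have hA1 : 0 < 1 - A := by rw [hA]; linarith
    have hPhi : Tendsto (fun s : ℝ => Φ s z) atTop (nhds A) := by
      have h := bgn_Phi_tendsto hz1 hz2
      refine h.congr (fun s => ?_)
      rw [hΦ']
    have T1 : Tendsto (fun s : ℝ => Φ s z ^ (α - 1)) atTop (nhds (A ^ (α - 1))) :=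
      hPhi.rpow_const (Or.inl hA0.ne')
    have T2 : Tendsto (fun s : ℝ => (1 - Φ s z) ^ (β - 1)) atTop (nhds ((1 - A) ^ (β - 1))) :=
      (tendsto_const_nhds.sub hPhi).rpow_const (Or.inl hA1.ne')
    have T3 : Tendsto (fun s : ℝ => φ s z) atTop (nhds (1/2)) := by
      rw [hφ']
      exact bgn_lim_lt habs
    have key : Tendsto (fun s : ℝ => f s x) atTop
        (nhds (1 / (σ * B) * A ^ (α - 1) * ((1 - A) ^ (β - 1)) * (1/2))) := by
      have := ((tendsto_const_nhds (x := 1 / (σ * B))).mul T1).mul T2 |>.mul T3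
      refine this.congr (fun s => ?_)
      rw [hf s x]
    have hval : 1 / (2 * σ) * ((((x - μ) / σ + 1) / 2) ^ (α - 1) *
        (1 - ((x - μ) / σ + 1) / 2) ^ (β - 1) / B)
        = 1 / (σ * B) * A ^ (α - 1) * ((1 - A) ^ (β - 1)) * (1/2) := by
      rw [← hz, ← hA]
      field_simp
    rw [hval]
    exact key
  · -- Part 2 : |z| > 1
    intro x hx
    set z : ℝ := (x - μ) / σ with hz
    have habs : 1 < |z| := by
      rw [hz, abs_div, abs_of_pos hσ, lt_div_iff₀ hσ]
      linarith
    rcases lt_or_ge 0 z with hzpos | hzneg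
    · -- z > 1
      have hw : 1 < z := by rwa [abs_of_pos hzpos] at habs
      have hPhi1 : Tendsto (fun s : ℝ => Φ s z) atTop (nhds 1) := by
        have h := tendsto_const_nhds (x := (1:ℝ)) |>.sub (bgn_tail_tendsto hw)
        rw [sub_zero] at h
        refine h.congr' ?_
        filter_upwards [eventually_ge_atTop (2:ℝ)] with s hs
        rw [hΦ']
        have := bgn_one_sub_Phi z hs
        linarith
      have TΦ : Tendsto (fun s : ℝ => Φ s z ^ (α - 1)) atTop (nhds 1) := by
        have := hPhi1.rpow_const (p := α - 1) (Or.inl one_ne_zero)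
        rwa [Real.one_rpow] at this
      have Tkey : Tendsto (fun s : ℝ => (1 - Φ s z) ^ (β - 1) * φ s z) atTop (nhds 0) := by
        have h := bgn_key hw hβ
        refine h.congr' ?_
        filter_upwards [eventually_ge_atTop (2:ℝ)] with s hs
        rw [hΦ', hφ', ← bgn_one_sub_Phi z hs]
        congr 2
        rw [abs_of_pos hzpos]
      have total : Tendsto (fun s : ℝ =>
          (1 / (σ * B) * Φ s z ^ (α - 1)) * ((1 - Φ s z) ^ (β - 1) * φ s z)) atTop
          (nhds 0) := by
        have := ((tendsto_const_nhds (x := 1 / (σ * B))).mul TΦ).mul Tkey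
        simpa using this
      refine total.congr (fun s => ?_)
      rw [hf s x, ← hz]
      ring
    · -- z < -1
      have hw : 1 < -z := by rwa [abs_of_nonpos hzneg] at habs
      have hPhi0 : Tendsto (fun s : ℝ => Φ s z) atTop (nhds 0) := by
        refine (bgn_tail_tendsto hw).congr (fun s => ?_)
        rw [hΦ' s z, bgn_Phi_reflect s z]
      have T1m : Tendsto (fun s : ℝ => (1 - Φ s z) ^ (β - 1)) atTop (nhds 1) := by
        have h0 : Tendsto (fun s : ℝ => 1 - Φ s z) atTop (nhds 1) := by
          have := (tendsto_const_nhds (x := (1:ℝ))).sub hPhi0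
          rwa [sub_zero] at this
        have := h0.rpow_const (p := β - 1) (Or.inl one_ne_zero)
        rwa [Real.one_rpow] at this
      have Tkey : Tendsto (fun s : ℝ => Φ s z ^ (α - 1) * φ s z) atTop (nhds 0) := by
        refine (bgn_key hw hα).congr (fun s => ?_)
        rw [hΦ' s z, bgn_Phi_reflect s z, hφ']
        simp [bgnphi, abs_of_nonpos hzneg]
      have total : Tendsto (fun s : ℝ =>
          (1 / (σ * B) * (1 - Φ s z) ^ (β - 1)) * (Φ s z ^ (α - 1) * φ s z)) atTop
          (nhds 0) := by
        have := ((tendsto_const_nhds (x := 1 / (σ * B))).mul T1m).mul Tkey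
        simpa using this
      refine total.congr (fun s => ?_)
      rw [hf s x, ← hz]
      ring
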